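/- arXiv:2107.05878 — 2 statements merged into one kernel-verified Lean document; each statement's English description precedes it below -/
import Mathlib

section
/- Let A be an n×n Metzler matrix with strictly positive column sums dominated structure as in the SIR linearization, C > 0 a strictly positive cost vector, and r ≥ 0. The linear constraints p ≥ 0 and pᵀ A - r pᵀ ≤ -C admit a solution if and only if A - rI is Hurwitz-stable, i.e. the largest real part of the eigenvalues of A is strictly less than r. -/
open Matrix

open Filter Topology Pointwise
open scoped ENNReal NNReal

section Aux

lemma pow_entry_nonneg' {n : ℕ} (M : Matrix (Fin n) (Fin n) ℝ)
    (hM : ∀ i j, 0 ≤ M i j) (k : ℕ) : ∀ i j, 0 ≤ (M ^ k) i j := by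
  induction k with
  | zero => intro i j; simp [Matrix.one_apply]; split <;> norm_num
  | succ m ih =>
    intro i j
    rw [pow_succ, Matrix.mul_apply]
    exact Finset.sum_nonneg fun l _ => mul_nonneg (ih i l) (hM l j)

lemma exists_eigvec' {n : ℕ} (Ac : Matrix (Fin n) (Fin n) ℂ) (μ : ℂ)
    (h : μ ∈ spectrum ℂ Ac) : ∃ v, v ≠ 0 ∧ Ac *ᵥ v = μ • v := by
  rw [spectrum.mem_iff] at h
  have hdet : (algebraMap ℂ (Matrix (Fin n) (Fin n) ℂ) μ - Ac).det = 0 := by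
    by_contra hd
    exact h ((Matrix.isUnit_iff_isUnit_det _).mpr (Ne.isUnit hd))
  obtain ⟨v, hv, hveq⟩ := (Matrix.exists_mulVec_eq_zero_iff).mpr hdet
  refine ⟨v, hv, ?_⟩
  rw [Matrix.sub_mulVec] at hveq
  have halg : algebraMap ℂ (Matrix (Fin n) (Fin n) ℂ) μ = μ • 1 :=
    Algebra.algebraMap_eq_smul_one μ
  rw [halg, Matrix.smul_mulVec, Matrix.one_mulVec] at hveq
  exact (sub_eq_zero.mp hveq).symm

lemma fwd_core' {n : ℕ} (A : Matrix (Fin n) (Fin n) ℝ) (C : Fin n → ℝ) (r : ℝ)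
    (hMetzler : ∀ i j, i ≠ j → 0 ≤ A i j) (hC : ∀ i, 0 < C i)
    (p : Fin n → ℝ) (hp : ∀ i, 0 ≤ p i) (hfeas : ∀ j, (p ᵥ* A) j - r * p j ≤ -C j)
    (μ : ℂ) (v : Fin n → ℂ) (hv : v ≠ 0)
    (heig : (A.map Complex.ofReal) *ᵥ v = μ • v) : μ.re < r := by
  set u : Fin n → ℝ := fun k => ‖v k‖ with hu
  have hu0 : ∀ k, 0 ≤ u k := fun k => norm_nonneg _
  have hrow : ∀ j, μ.re * u j ≤ ∑ k, A j k * u k := by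
    intro j
    have h1 : (μ - (A j j : ℂ)) * v j = ∑ k ∈ Finset.univ.erase j, (A j k : ℂ) * v k := by
      have h2 : ∑ k, (A j k : ℂ) * v k = μ * v j := by
        have := congrFun heig j
        simpa [Matrix.mulVec, dotProduct, Matrix.map_apply] using this
      have h3 : (A j j : ℂ) * v j + ∑ k ∈ Finset.univ.erase j, (A j k : ℂ) * v k
          = ∑ k, (A j k : ℂ) * v k := by
        exact Finset.add_sum_erase _ (fun k => (A j k : ℂ) * v k) (Finset.mem_univ j)
      rw [← h3] at h2
      linear_combination -h2
    have h4 : ‖μ - (A j j : ℂ)‖ * u j ≤ ∑ k ∈ Finset.univ.erase j, A j k * u k := by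
      have habs : ‖μ - (A j j : ℂ)‖ * u j
          = ‖(μ - (A j j : ℂ)) * v j‖ := by
        rw [norm_mul]
      rw [habs, h1]
      refine le_trans (norm_sum_le _ _) ?_
      refine Finset.sum_le_sum fun k hk => ?_
      rw [norm_mul]
      have hk' : k ≠ j := Finset.ne_of_mem_erase hk
      have := hMetzler j k (Ne.symm hk')
      simp [Complex.norm_real, Real.norm_eq_abs, abs_of_nonneg this, hu]
    have h5 : (μ.re - A j j) * u j ≤ ‖μ - (A j j : ℂ)‖ * u j := by
      apply mul_le_mul_of_nonneg_right _ (hu0 j)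
      have := Complex.re_le_norm (μ - (A j j : ℂ))
      simpa using this
    have h6 : (μ.re - A j j) * u j ≤ ∑ k ∈ Finset.univ.erase j, A j k * u k := le_trans h5 h4
    have h7 : A j j * u j + ∑ k ∈ Finset.univ.erase j, A j k * u k
        = ∑ k, A j k * u k := by
      exact Finset.add_sum_erase _ (fun k => A j k * u k) (Finset.mem_univ j)
    nlinarith [h6]
  set T : ℝ := ∑ j, p j * u j with hT
  have hT0 : 0 ≤ T := Finset.sum_nonneg fun j _ => mul_nonneg (hp j) (hu0 j)
  have hE : 0 < ∑ k, u k * C k := by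
    obtain ⟨k, hk⟩ := Function.ne_iff.mp hv
    apply Finset.sum_pos' (fun k _ => mul_nonneg (hu0 k) (hC k).le)
    exact ⟨k, Finset.mem_univ k, mul_pos (by simpa [hu] using hk) (hC k)⟩
  have hsum : μ.re * T ≤ r * T - ∑ k, u k * C k := by
    have hL : μ.re * T ≤ ∑ j, p j * ∑ k, A j k * u k := by
      rw [hT, Finset.mul_sum]
      refine Finset.sum_le_sum fun j _ => ?_
      have := mul_le_mul_of_nonneg_left (hrow j) (hp j)
      nlinarith [this]
    have hswap : ∑ j, p j * ∑ k, A j k * u k = ∑ k, (p ᵥ* A) k * u k := by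
      simp_rw [Finset.mul_sum]
      rw [Finset.sum_comm]
      refine Finset.sum_congr rfl fun k _ => ?_
      simp [Matrix.vecMul, dotProduct, Finset.sum_mul]
      exact Finset.sum_congr rfl fun x _ => by ring
    have hR : ∑ k, (p ᵥ* A) k * u k ≤ ∑ k, (r * p k - C k) * u k := by
      refine Finset.sum_le_sum fun k _ => ?_
      apply mul_le_mul_of_nonneg_right _ (hu0 k)
      have := hfeas k; linarith
    have hRe : ∑ k, (r * p k - C k) * u k = r * T - ∑ k, u k * C k := by
      rw [hT, Finset.mul_sum, ← Finset.sum_sub_distrib]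
      refine Finset.sum_congr rfl fun k _ => by ring
    calc μ.re * T ≤ ∑ j, p j * ∑ k, A j k * u k := hL
      _ = ∑ k, (p ᵥ* A) k * u k := hswap
      _ ≤ ∑ k, (r * p k - C k) * u k := hR
      _ = r * T - ∑ k, u k * C k := hRe
  by_contra hcon
  push_neg at hcon
  nlinarith [mul_le_mul_of_nonneg_right hcon hT0]

lemma spectrum_bounds' {n : ℕ} (hn : 0 < n) (Ac : Matrix (Fin n) (Fin n) ℂ) (r : ℝ)
    (h : ∀ μ ∈ spectrum ℂ Ac, μ.re < r) :
    ∃ R δ : ℝ, 0 ≤ R ∧ 0 < δ ∧ ∀ μ ∈ spectrum ℂ Ac, ‖μ‖ ≤ R ∧ μ.re ≤ r - δ := by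
  haveI : Nonempty (Fin n) := ⟨⟨0, hn⟩⟩
  letI : NormedRing (Matrix (Fin n) (Fin n) ℂ) := Matrix.linftyOpNormedRing
  letI : NormedAlgebra ℂ (Matrix (Fin n) (Fin n) ℂ) := Matrix.linftyOpNormedAlgebra
  have hne : (spectrum ℂ Ac).Nonempty := spectrum.nonempty Ac
  have hK : IsCompact (spectrum ℂ Ac) := spectrum.isCompact Ac
  obtain ⟨μ₀, hμ₀, hmax⟩ := hK.exists_isMaxOn hne Complex.continuous_re.continuousOn
  refine ⟨‖Ac‖, r - μ₀.re, norm_nonneg _, by linarith [h μ₀ hμ₀], fun μ hμ => ?_⟩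
  exact ⟨spectrum.norm_le_norm_of_mem hμ,
    by have := hmax hμ; simp only [Set.mem_setOf_eq] at this; linarith⟩

lemma exists_nonneg_left_inverse' {n : ℕ} (hn : 0 < n) (Mr : Matrix (Fin n) (Fin n) ℝ)
    (hMr : ∀ i j, 0 ≤ Mr i j)
    (hspec : ∀ z ∈ spectrum ℂ (Mr.map Complex.ofReal), ‖z‖ < 1) :
    ∃ G : Matrix (Fin n) (Fin n) ℝ, (∀ i j, 0 ≤ G i j) ∧ G * (1 - Mr) = 1 := by
  haveI : Nonempty (Fin n) := ⟨⟨0, hn⟩⟩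
  letI : NormedRing (Matrix (Fin n) (Fin n) ℂ) := Matrix.linftyOpNormedRing
  letI : NormedAlgebra ℂ (Matrix (Fin n) (Fin n) ℂ) := Matrix.linftyOpNormedAlgebra
  set M : Matrix (Fin n) (Fin n) ℂ := Mr.map Complex.ofReal with hMdef
  -- spectral radius < 1
  have hρ : spectralRadius ℂ M < 1 := by
    have := spectrum.spectralRadius_lt_of_forall_lt M
      (r := 1) (fun z hz => by
        have := hspec z hz
        rwa [← coe_nnnorm, ← NNReal.coe_one, NNReal.coe_lt_coe] at this)
    simpa using this
  -- Gelfand: eventually ‖M^k‖ ≤ q^k with q < 1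
  obtain ⟨q, hq1, hq2⟩ := ENNReal.lt_iff_exists_nnreal_btwn.mp hρ
  have hq2' : q < 1 := by exact_mod_cast hq2
  have hgel := spectrum.pow_nnnorm_pow_one_div_tendsto_nhds_spectralRadius M
  have hev : ∀ᶠ k : ℕ in atTop, ((‖M ^ k‖₊ : ℝ≥0∞)) ^ (1 / (k : ℝ)) < (q : ℝ≥0∞) :=
    hgel.eventually_lt_const hq1
  have hev2 : ∀ᶠ k in atTop, ‖M ^ k‖ ≤ (q : ℝ) ^ k := by
    filter_upwards [hev, eventually_ge_atTop 1] with k hk hk1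
    have hk0 : (k : ℝ) ≠ 0 := Nat.cast_ne_zero.mpr (by omega)
    have h1 : ((‖M ^ k‖₊ : ℝ≥0∞)) = (((‖M ^ k‖₊ : ℝ≥0∞)) ^ (1 / (k : ℝ))) ^ (k : ℝ) := by
      rw [← ENNReal.rpow_mul, one_div_mul_cancel hk0, ENNReal.rpow_one]
    have h2 : ((‖M ^ k‖₊ : ℝ≥0∞)) ≤ ((q : ℝ≥0∞)) ^ (k : ℝ) := by
      rw [h1]
      exact ENNReal.rpow_le_rpow hk.le (Nat.cast_nonneg k)
    rw [ENNReal.rpow_natCast, ← ENNReal.coe_pow, ENNReal.coe_le_coe] at h2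
    calc ‖M ^ k‖ = ((‖M ^ k‖₊ : ℝ)) := rfl
      _ ≤ ((q ^ k : ℝ≥0) : ℝ) := by exact_mod_cast h2
      _ = (q : ℝ) ^ k := by push_cast; ring
  -- powers tend to zero
  have hpow0 : Tendsto (fun k => M ^ k) atTop (𝓝 0) := by
    apply squeeze_zero_norm' hev2
    exact tendsto_pow_atTop_nhds_zero_of_lt_one q.coe_nonneg (by exact_mod_cast hq2')
  -- 1 - M is a unit
  have h1M : IsUnit ((1 : Matrix (Fin n) (Fin n) ℂ) - M) := by
    have h1spec : (1 : ℂ) ∉ spectrum ℂ M := fun hmem => by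
      have := hspec 1 hmem; simp at this
    rw [spectrum.notMem_iff] at h1spec
    simpa using h1spec
  obtain ⟨u, hu⟩ := h1M
  set L : Matrix (Fin n) (Fin n) ℂ := ↑u⁻¹ with hL
  -- partial sums converge to L
  have hgeom : ∀ K : ℕ, (∑ k ∈ Finset.range K, M ^ k) * (1 - M) = 1 - M ^ K := by
    intro K
    have := geom_sum_mul M K
    calc (∑ k ∈ Finset.range K, M ^ k) * (1 - M)
        = -((∑ k ∈ Finset.range K, M ^ k) * (M - 1)) := by rw [← mul_neg, neg_sub]
      _ = -(M ^ K - 1) := by rw [this]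
      _ = 1 - M ^ K := by rw [neg_sub]
  have hSrep : ∀ K : ℕ, (∑ k ∈ Finset.range K, M ^ k) = (1 - M ^ K) * L := by
    intro K
    have : (∑ k ∈ Finset.range K, M ^ k) * ((1 - M) * L) = (1 - M ^ K) * L := by
      rw [← mul_assoc, hgeom]
    rwa [← hu, Units.mul_inv, mul_one] at this
  have hStend : Tendsto (fun K => ∑ k ∈ Finset.range K, M ^ k) atTop (𝓝 L) := by
    simp_rw [hSrep]
    have : Tendsto (fun K => (1 - M ^ K) * L) atTop (𝓝 ((1 - 0) * L)) :=
      ((tendsto_const_nhds.sub hpow0).mul tendsto_const_nhds)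
    simpa using this
  -- entrywise
  have hnorm_entry : ∀ (X : Matrix (Fin n) (Fin n) ℂ) (i j : Fin n), ‖X i j‖ ≤ ‖X‖ := by
    intro X i j
    have h1 : ‖X i j‖₊ ≤ ∑ j', ‖X i j'‖₊ :=
      Finset.single_le_sum (f := fun j' => ‖X i j'‖₊) (fun _ _ => zero_le) (Finset.mem_univ j)
    have h2 : (∑ j', ‖X i j'‖₊) ≤ Finset.univ.sup fun i => ∑ j', ‖X i j'‖₊ :=
      Finset.le_sup (f := fun i => ∑ j', ‖X i j'‖₊) (Finset.mem_univ i)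
    have h3 : ‖X‖₊ = Finset.univ.sup fun i => ∑ j', ‖X i j'‖₊ :=
      Matrix.linfty_opNNNorm_def X
    have : ‖X i j‖₊ ≤ ‖X‖₊ := by rw [h3]; exact le_trans h1 h2
    exact_mod_cast this
  have hentry : ∀ i j, Tendsto (fun K => (∑ k ∈ Finset.range K, M ^ k) i j) atTop (𝓝 (L i j)) := by
    intro i j
    rw [tendsto_iff_norm_sub_tendsto_zero]
    apply squeeze_zero (fun K => norm_nonneg _) (g := fun K => ‖(∑ k ∈ Finset.range K, M ^ k) - L‖)
    · intro K
      have := hnorm_entry ((∑ k ∈ Finset.range K, M ^ k) - L) i j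
      simpa [Matrix.sub_apply] using this
    · exact (tendsto_iff_norm_sub_tendsto_zero.mp hStend)
  -- partial sums are real and nonneg
  have hSreal : ∀ K i j, (∑ k ∈ Finset.range K, M ^ k) i j
      = Complex.ofReal ((∑ k ∈ Finset.range K, Mr ^ k) i j) := by
    intro K i j
    have hM' : M = (Complex.ofRealHom.mapMatrix : Matrix (Fin n) (Fin n) ℝ →+* _) Mr := rfl
    rw [hM']
    have hpw : ∀ k : ℕ, (Complex.ofRealHom.mapMatrix Mr) ^ k
        = Complex.ofRealHom.mapMatrix (Mr ^ k) := fun k => (map_pow _ _ _).symm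
    simp_rw [hpw, ← map_sum, RingHom.mapMatrix_apply, Matrix.map_apply,
      Complex.ofRealHom_eq_coe]
  -- limit entries: real and nonneg
  have hLre : ∀ i j, 0 ≤ (L i j).re := by
    intro i j
    have h1 : Tendsto (fun K => ((∑ k ∈ Finset.range K, M ^ k) i j).re) atTop (𝓝 ((L i j).re)) :=
      (Complex.continuous_re.tendsto _).comp (hentry i j)
    refine ge_of_tendsto h1 (Eventually.of_forall fun K => ?_)
    rw [hSreal K i j, Complex.ofReal_re]
    have hs : (∑ k ∈ Finset.range K, Mr ^ k) i j = ∑ k ∈ Finset.range K, (Mr ^ k) i j := by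
      simp [Matrix.sum_apply]
    rw [hs]
    exact Finset.sum_nonneg fun k _ => pow_entry_nonneg' Mr hMr k i j
  have hLim : ∀ i j, (L i j).im = 0 := by
    intro i j
    have h1 : Tendsto (fun K => ((∑ k ∈ Finset.range K, M ^ k) i j).im) atTop (𝓝 ((L i j).im)) :=
      (Complex.continuous_im.tendsto _).comp (hentry i j)
    have h2 : (fun K => ((∑ k ∈ Finset.range K, M ^ k) i j).im) = fun _ => (0 : ℝ) := by
      funext K; rw [hSreal K i j, Complex.ofReal_im]
    rw [h2] at h1
    exact (tendsto_nhds_unique tendsto_const_nhds h1).symm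
  -- construct G
  refine ⟨fun i j => (L i j).re, fun i j => hLre i j, ?_⟩
  -- L = G.map ofReal
  have hLG : L = (Matrix.of fun i j => (L i j).re).map Complex.ofReal := by
    ext i j
    simp only [Matrix.map_apply, Matrix.of_apply]
    exact Complex.ext (by simp) (by simp [hLim i j])
  -- complex identity: L * (1 - M) = 1
  have hid : L * (1 - M) = 1 := by rw [← hu, hL]; exact u.inv_mul
  -- transfer to ℝ
  have hmapid : (Complex.ofRealHom.mapMatrix : Matrix (Fin n) (Fin n) ℝ →+* _)
      ((Matrix.of fun i j => (L i j).re) * (1 - Mr)) = Complex.ofRealHom.mapMatrix 1 := by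
    rw [_root_.map_mul, _root_.map_sub, _root_.map_one]
    have h1 : (Complex.ofRealHom.mapMatrix : Matrix (Fin n) (Fin n) ℝ →+* _)
        (Matrix.of fun i j => (L i j).re) = L := by
      rw [RingHom.mapMatrix_apply]; exact hLG.symm
    have h2 : (Complex.ofRealHom.mapMatrix : Matrix (Fin n) (Fin n) ℝ →+* _) Mr = M := rfl
    rw [h1, h2, hid]
  have hinj : Function.Injective
      (Complex.ofRealHom.mapMatrix : Matrix (Fin n) (Fin n) ℝ →+* Matrix (Fin n) (Fin n) ℂ) := by
    intro X Y hXY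
    ext i j
    have h : (Complex.ofRealHom.mapMatrix X : Matrix (Fin n) (Fin n) ℂ) i j
        = (Complex.ofRealHom.mapMatrix Y : Matrix (Fin n) (Fin n) ℂ) i j := by rw [hXY]
    simp only [RingHom.mapMatrix_apply, Matrix.map_apply, Complex.ofRealHom_eq_coe,
      Complex.ofReal_inj] at h
    exact h
  exact hinj hmapid


lemma spectrum_shift' {n : ℕ} [Nonempty (Fin n)] (Ac : Matrix (Fin n) (Fin n) ℂ) (k c : ℂ)
    (hk : k ≠ 0) (z : ℂ)
    (hz : z ∈ spectrum ℂ (k • (Ac + c • (1 : Matrix (Fin n) (Fin n) ℂ)))) :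
    ∃ μ ∈ spectrum ℂ Ac, z = k * (μ + c) := by
  have h1 : c • (1 : Matrix (Fin n) (Fin n) ℂ) = algebraMap ℂ _ c :=
    (Algebra.algebraMap_eq_smul_one c).symm
  rw [h1] at hz
  have h2 : spectrum ℂ (Ac + algebraMap ℂ (Matrix (Fin n) (Fin n) ℂ) c)
      = spectrum ℂ Ac + {c} := (spectrum.add_singleton_eq Ac c).symm
  have h3 : k • (Ac + algebraMap ℂ (Matrix (Fin n) (Fin n) ℂ) c)
      = (Units.mk0 k hk) • (Ac + algebraMap ℂ (Matrix (Fin n) (Fin n) ℂ) c) := rfl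
  rw [h3, spectrum.unit_smul_eq_smul, h2] at hz
  obtain ⟨w, hw, hwz⟩ := hz
  rw [Set.add_singleton] at hw
  obtain ⟨μ, hμ, hμw⟩ := hw
  exact ⟨μ, hμ, by rw [← hwz, ← hμw]; simp [Units.smul_def, mul_comm]⟩

end Aux


/-- For a Metzler matrix `A` and strictly positive cost vector `C`, the linear
constraints `p ≥ 0`, `pᵀ A - r pᵀ ≤ -C` are feasible if and only if `A - rI` is
Hurwitz-stable, i.e. every eigenvalue of `A` has real part strictly less
than `r`. -/
theorem dual_feasible_iff_hurwitz
    {n : ℕ} (hn : 0 < n) (A : Matrix (Fin n) (Fin n) ℝ) (C : Fin n → ℝ) (r : ℝ)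
    (hMetzler : ∀ i j, i ≠ j → 0 ≤ A i j)
    (hC : ∀ i, 0 < C i) (hr : 0 ≤ r) :
    (∃ p : Fin n → ℝ, (∀ i, 0 ≤ p i) ∧ ∀ j, (p ᵥ* A) j - r * p j ≤ -C j) ↔
      (∀ μ : ℂ, μ ∈ spectrum ℂ (A.map Complex.ofReal) → μ.re < r) := by
  haveI : Nonempty (Fin n) := ⟨⟨0, hn⟩⟩
  constructor
  · rintro ⟨p, hp, hfeas⟩ μ hμ
    obtain ⟨v, hv, heig⟩ := exists_eigvec' _ μ hμ
    exact fwd_core' A C r hMetzler hC p hp hfeas μ v hv heig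
  · intro hspecRe
    obtain ⟨R, δ, hR0, hδ0, hbound⟩ := spectrum_bounds' hn (A.map Complex.ofReal) r hspecRe
    -- choose the shift c
    set c : ℝ := 1 + max (R ^ 2 / (2 * δ)) (Finset.univ.sup' Finset.univ_nonempty fun i => -A i i)
      with hc
    have hc1 : 1 + R ^ 2 / (2 * δ) ≤ c := by
      have := le_max_left (R ^ 2 / (2 * δ))
        (Finset.univ.sup' Finset.univ_nonempty fun i => -A i i)
      simp only [hc]; linarith
    have hcdiag : ∀ i, 0 ≤ A i i + c := by
      intro i
      have h1 : -A i i ≤ Finset.univ.sup' Finset.univ_nonempty fun i => -A i i :=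
        Finset.le_sup' (fun i => -A i i) (Finset.mem_univ i)
      have h2 := le_max_right (R ^ 2 / (2 * δ))
        (Finset.univ.sup' Finset.univ_nonempty fun i => -A i i)
      simp only [hc]; linarith
    clear_value c
    clear hc
    have hdiv0 : 0 ≤ R ^ 2 / (2 * δ) := div_nonneg (sq_nonneg R) (by linarith)
    have hc0 : 0 < c := by linarith
    have hrc0 : 0 < r + c := by linarith
    have hgap : R ^ 2 - r ^ 2 < 2 * c * δ := by
      have h1 : R ^ 2 / (2 * δ) * (2 * δ) = R ^ 2 := by field_simp
      nlinarith [sq_nonneg r, hδ0, hc1]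
    -- the nonnegative matrix
    set Mr : Matrix (Fin n) (Fin n) ℝ := (r + c)⁻¹ • (A + c • (1 : Matrix (Fin n) (Fin n) ℝ))
      with hMr
    have hMrnn : ∀ i j, 0 ≤ Mr i j := by
      intro i j
      simp only [hMr, Matrix.smul_apply, Matrix.add_apply, Matrix.one_apply, smul_eq_mul]
      have h2 : (0:ℝ) ≤ (r + c)⁻¹ := by positivity
      rcases eq_or_ne i j with h | h
      · simp only [h, if_pos rfl, if_true, mul_one]
        have := hcdiag j
        nlinarith
      · simp only [if_neg h, mul_zero, add_zero]
        nlinarith [hMetzler i j h]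
    -- spectrum of the normalized matrix
    have hspecM : ∀ z ∈ spectrum ℂ (Mr.map Complex.ofReal), ‖z‖ < 1 := by
      intro z hz
      have hMC : Mr.map Complex.ofReal
          = ((r + c : ℝ) : ℂ)⁻¹ • ((A.map Complex.ofReal)
            + ((c : ℝ) : ℂ) • (1 : Matrix (Fin n) (Fin n) ℂ)) := by
        ext i j
        simp only [Matrix.map_apply, Matrix.smul_apply, Matrix.add_apply, Matrix.one_apply,
          smul_eq_mul, hMr]
        rcases eq_or_ne i j with h | h
        · simp only [h, if_pos rfl]
          push_cast
          ring
        · simp only [if_neg h]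
          push_cast
          ring
      rw [hMC] at hz
      have hkne : (((r + c : ℝ) : ℂ))⁻¹ ≠ 0 := by
        simp only [ne_eq, inv_eq_zero, Complex.ofReal_eq_zero]
        linarith
      obtain ⟨μ, hμ, hzμ⟩ := spectrum_shift' (A.map Complex.ofReal) _ _ hkne z hz
      obtain ⟨hμR, hμre⟩ := hbound μ hμ
      rw [hzμ]
      rw [norm_mul, norm_inv]
      have hnormrc : ‖((r + c : ℝ) : ℂ)‖ = r + c := by
        rw [Complex.norm_real, Real.norm_eq_abs, abs_of_pos hrc0]
      rw [hnormrc]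
      rw [inv_mul_lt_iff₀ hrc0, mul_one]
      -- ‖μ + c‖ < r + c
      have e1 : ‖μ + ((c : ℝ) : ℂ)‖ ^ 2 = (μ.re + c) ^ 2 + μ.im ^ 2 := by
        rw [Complex.sq_norm, Complex.normSq_apply]
        simp only [Complex.add_re, Complex.add_im, Complex.ofReal_re, Complex.ofReal_im, add_zero]
        ring
      have e2 : ‖μ‖ ^ 2 = μ.re ^ 2 + μ.im ^ 2 := by
        rw [Complex.sq_norm, Complex.normSq_apply]
        ring
      have hsq : ‖μ + ((c : ℝ) : ℂ)‖ ^ 2 = ‖μ‖ ^ 2 + 2 * c * μ.re + c ^ 2 := by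
        rw [e1, e2]; ring
      have hμR2 : ‖μ‖ ^ 2 ≤ R ^ 2 := by nlinarith [norm_nonneg μ]
      have h2c : 2 * c * μ.re ≤ 2 * c * (r - δ) :=
        mul_le_mul_of_nonneg_left hμre (by positivity)
      have hlt : ‖μ + ((c : ℝ) : ℂ)‖ ^ 2 < (r + c) ^ 2 := by nlinarith
      exact lt_of_pow_lt_pow_left₀ 2 hrc0.le hlt
    obtain ⟨G, hGnn, hGinv⟩ := exists_nonneg_left_inverse' hn Mr hMrnn hspecM
    -- main identity
    have hmat : G * ((r : ℝ) • (1 : Matrix (Fin n) (Fin n) ℝ) - A)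
        = (r + c) • (1 : Matrix (Fin n) (Fin n) ℝ) := by
      have h1M : (1 : Matrix (Fin n) (Fin n) ℝ) - Mr
          = (r + c)⁻¹ • ((r : ℝ) • (1 : Matrix (Fin n) (Fin n) ℝ) - A) := by
        ext i j
        simp only [hMr, Matrix.sub_apply, Matrix.smul_apply, Matrix.add_apply,
          Matrix.one_apply, smul_eq_mul]
        rcases eq_or_ne i j with h | h
        · simp only [h, if_pos rfl, if_true, mul_one]
          field_simp
          ring
        · simp only [if_neg h, mul_zero, add_zero, mul_one]
          field_simp
          ring
      rw [h1M, Matrix.mul_smul] at hGinv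
      calc G * ((r : ℝ) • (1 : Matrix (Fin n) (Fin n) ℝ) - A)
          = (r + c) • ((r + c)⁻¹ • (G * ((r : ℝ) • 1 - A))) := by
            rw [smul_smul, mul_inv_cancel₀ (ne_of_gt hrc0), one_smul]
        _ = (r + c) • (1 : Matrix (Fin n) (Fin n) ℝ) := by rw [hGinv]
    set q : Fin n → ℝ := C ᵥ* G with hq
    have hqj : ∀ j, r * q j - (q ᵥ* A) j = (r + c) * C j := by
      intro j
      have h1 : (q ᵥ* ((r : ℝ) • (1 : Matrix (Fin n) (Fin n) ℝ) - A)) j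
          = (C ᵥ* ((r + c) • (1 : Matrix (Fin n) (Fin n) ℝ))) j := by
        rw [hq, Matrix.vecMul_vecMul, hmat]
      have h2 : (C ᵥ* ((r + c) • (1 : Matrix (Fin n) (Fin n) ℝ))) j = (r + c) * C j := by
        simp [Matrix.vecMul, dotProduct, Matrix.smul_apply, Matrix.one_apply,
          mul_ite, Finset.sum_ite_eq', mul_comm]
      have h3 : (q ᵥ* ((r : ℝ) • (1 : Matrix (Fin n) (Fin n) ℝ) - A)) j
          = r * q j - (q ᵥ* A) j := by
        rw [Matrix.vecMul_sub]
        simp only [Pi.sub_apply]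
        congr 1
        simp [Matrix.vecMul, dotProduct, Matrix.smul_apply, Matrix.one_apply,
          mul_ite, Finset.sum_ite_eq', mul_comm, Finset.mul_sum]
      rw [h3, h2] at h1
      linarith [h1]
    refine ⟨fun j => (r + c)⁻¹ * q j, fun j => ?_, fun j => ?_⟩
    · have hq0 : 0 ≤ q j := by
        rw [hq]
        simp only [Matrix.vecMul, dotProduct]
        exact Finset.sum_nonneg fun i _ => mul_nonneg (hC i).le (hGnn i j)
      positivity
    · have hpA : ((fun j => (r + c)⁻¹ * q j) ᵥ* A) j = (r + c)⁻¹ * (q ᵥ* A) j := by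
        simp only [Matrix.vecMul, dotProduct, Finset.mul_sum]
        exact Finset.sum_congr rfl fun i _ => by ring
      rw [hpA]
      have := hqj j
      have hCpos := hC j
      have h0 : (r + c)⁻¹ * ((r + c) * C j) = C j := by field_simp
      nlinarith [this, h0, inv_pos.mpr hrc0]
end

section
/- Consider the nonlinear SIR mean-field dynamics χ̇ᵢ = (1 - χᵢ - zᵢ) Σⱼ βᵢⱼ χⱼ - δᵢ χᵢ, żᵢ = δᵢ χᵢ with βᵢⱼ ≥ 0, δᵢ ≥ 0, and the linear system ẋᵢ = Σⱼ βᵢⱼ xⱼ - δᵢ xᵢ. If 0 ≤ χᵢ(0) ≤ xᵢ(0), χᵢ(0) + zᵢ(0) ≤ 1, and zᵢ(0) ≥ 0 for all i, then xᵢ(t) ≥ χᵢ(t) ≥ 0 for all t ≥ 0 and all i. -/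
open Finset Set

lemma hasDerivAt_posPartSq (x : ℝ) :
    HasDerivAt (fun y : ℝ => (max 0 y) ^ 2) (2 * max 0 x) x := by
  rcases lt_trichotomy x 0 with hx | hx | hx
  · have h : (fun y : ℝ => (max 0 y) ^ 2) =ᶠ[nhds x] (fun _ : ℝ => (0:ℝ)) := by
      filter_upwards [eventually_lt_nhds hx] with y hy
      simp [max_eq_left hy.le]
    rw [max_eq_left hx.le]
    simpa using (hasDerivAt_const x (0:ℝ)).congr_of_eventuallyEq h
  · subst hx
    rw [hasDerivAt_iff_tendsto_slope]
    have h : ∀ y : ℝ, |slope (fun y : ℝ => (max 0 y) ^ 2) 0 y| ≤ |y| := by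
      intro y
      rw [slope_def_field]
      rcases le_total y 0 with hy | hy
      · simp [max_eq_left hy]
      · rw [max_eq_right hy]
        rcases eq_or_lt_of_le hy with rfl | hy'
        · simp
        · have hne : y - 0 ≠ 0 := by simpa [sub_eq_zero] using hy'.ne'
          have : (y ^ 2 - (max 0 0) ^ 2) / (y - 0) = y := by
            field_simp [pow_two]
            rw [max_self]; ring
          rw [this]
    have habs : Filter.Tendsto (fun y : ℝ => |y|) (nhdsWithin 0 {(0:ℝ)}ᶜ) (nhds 0) := by
      have := (continuous_abs.tendsto (0:ℝ))
      simpa using this.mono_left nhdsWithin_le_nhds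
    simp only [max_eq_left le_rfl, mul_zero]
    refine squeeze_zero_norm (fun y => ?_) habs
    simpa using h y
  · have h : (fun y : ℝ => (max 0 y) ^ 2) =ᶠ[nhds x] (fun y : ℝ => y ^ 2) := by
      filter_upwards [eventually_gt_nhds hx] with y hy
      simp [max_eq_right hy.le]
    rw [max_eq_right hx.le]
    have h2 := hasDerivAt_pow 2 x
    norm_num at h2
    exact h2.congr_of_eventuallyEq h


lemma neg_mul_le {a b A B : ℝ} (hA : |a| ≤ A) (hB : |b| ≤ B) :
    -(a * b) ≤ B * max 0 (-a) + A * max 0 (-b) := by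
  rw [abs_le] at hA hB
  rcases le_total a 0 with ha | ha <;> rcases le_total b 0 with hb | hb <;>
    [rw [max_eq_right (by linarith), max_eq_right (by linarith)];
     rw [max_eq_right (by linarith), max_eq_left (by linarith)];
     rw [max_eq_left (by linarith), max_eq_right (by linarith)];
     rw [max_eq_left (by linarith), max_eq_left (by linarith)]] <;> nlinarith [hA.1, hA.2, hB.1, hB.2]

/-- Invariance of the nonnegative orthant for cooperative-type systems on `[0, T]`. -/
lemma orthant_invariance {ι : Type*} [Fintype ι] (u u' : ℝ → ι → ℝ) (T C : ℝ) (hC : 0 ≤ C)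
    (hderiv : ∀ i, ∀ t ∈ Icc (0:ℝ) T, HasDerivAt (fun s => u s i) (u' t i) t)
    (h0 : ∀ i, 0 ≤ u 0 i)
    (hbound : ∀ t ∈ Icc (0:ℝ) T, ∀ i, u t i ≤ 0 →
      -u' t i ≤ C * ∑ j, max 0 (-u t j)) :
    ∀ t ∈ Icc (0:ℝ) T, ∀ i, 0 ≤ u t i := by
  classical
  set K : ℝ := 2 * C * (Fintype.card ι) with hK
  have hK0 : 0 ≤ K := by positivity
  set φ : ℝ → ℝ := fun t => ∑ i, (max 0 (-u t i)) ^ 2 with hφ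
  set φ' : ℝ → ℝ := fun t => ∑ i, 2 * max 0 (-u t i) * (-u' t i) with hφ'
  have hφderiv : ∀ t ∈ Icc (0:ℝ) T, HasDerivAt φ (φ' t) t := by
    intro t ht
    exact HasDerivAt.fun_sum fun i _ => by
      have h := (hasDerivAt_posPartSq (-u t i)).comp t ((hderiv i t ht).neg); exact h
  have hφnonneg : ∀ t, 0 ≤ φ t := fun t => Finset.sum_nonneg fun i _ => by positivity
  have hφ0 : φ 0 = 0 := by
    refine Finset.sum_eq_zero fun i _ => ?_
    rw [max_eq_left (by linarith [h0 i])]; ring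
  have hφbound : ∀ t ∈ Icc (0:ℝ) T, φ' t ≤ K * φ t := by
    intro t ht
    set S : ℝ := ∑ j, max 0 (-u t j) with hS
    have hS0 : 0 ≤ S := Finset.sum_nonneg fun j _ => le_max_left _ _
    have h1 : φ' t ≤ ∑ i : ι, 2 * C * (max 0 (-u t i) * S) := by
      refine Finset.sum_le_sum fun i _ => ?_
      rcases le_or_gt (u t i) 0 with hui | hui
      · have := hbound t ht i hui
        have hm : 0 ≤ max 0 (-u t i) := le_max_left _ _
        nlinarith
      · rw [max_eq_left (by linarith)]
        nlinarith
    rw [← Finset.mul_sum, ← Finset.sum_mul] at h1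
    have h2 : S * S ≤ (Fintype.card ι) * φ t := by
      have := sq_sum_le_card_mul_sum_sq (s := (univ : Finset ι))
        (f := fun j => max 0 (-u t j))
      simpa [hS, hφ, sq, Finset.card_univ] using this
    calc φ' t ≤ 2 * C * (S * S) := h1
      _ ≤ 2 * C * ((Fintype.card ι) * φ t) := by nlinarith
      _ = K * φ t := by ring
  -- Gronwall: ψ = φ * exp(-K t) is antitone on [0,T]
  set ψ : ℝ → ℝ := fun t => φ t * Real.exp (-K * t) with hψ
  have hψderiv : ∀ t ∈ Icc (0:ℝ) T, HasDerivAt ψ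
      (φ' t * Real.exp (-K * t) + φ t * (-K * Real.exp (-K * t))) t := by
    intro t ht
    have he : HasDerivAt (fun s => Real.exp (-K * s)) (-K * Real.exp (-K * t)) t := by
      have h1 : HasDerivAt (fun s : ℝ => -K * s) (-K) t := by
        simpa using (hasDerivAt_id t).const_mul (-K)
      have h2 := (Real.hasDerivAt_exp (-K * t)).comp t h1
      have h3 : Real.exp (-K * t) * (-K) = -K * Real.exp (-K * t) := mul_comm _ _
      exact h3 ▸ h2
    exact (hφderiv t ht).mul he
  have hanti : AntitoneOn ψ (Icc 0 T) := by
    refine antitoneOn_of_deriv_nonpos (convex_Icc 0 T) ?_ ?_ ?_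
    · exact fun t ht => ((hψderiv t ht).continuousAt).continuousWithinAt
    · intro t ht
      rw [interior_Icc] at ht
      exact ((hψderiv t (Ioo_subset_Icc_self ht)).differentiableAt).differentiableWithinAt
    · intro t ht
      rw [interior_Icc] at ht
      have ht' := Ioo_subset_Icc_self ht
      rw [(hψderiv t ht').deriv]
      have h1 := hφbound t ht'
      have h2 := Real.exp_pos (-K * t)
      nlinarith
  intro t ht i
  have h0mem : (0:ℝ) ∈ Icc (0:ℝ) T := ⟨le_refl 0, le_trans ht.1 ht.2⟩
  have hψt : ψ t ≤ ψ 0 := hanti h0mem ht ht.1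
  have hψ0 : ψ 0 = 0 := by simp [hψ, hφ0]
  have hφt : φ t ≤ 0 := by
    have he := Real.exp_pos (-K * t)
    rw [hψ0] at hψt
    have hψt' : φ t * Real.exp (-K * t) ≤ 0 := hψ0 ▸ hψt
    nlinarith [hψt', he]
  have hφteq : φ t = 0 := le_antisymm hφt (hφnonneg t)
  have hterm : (max 0 (-u t i)) ^ 2 = 0 := by
    have := (Finset.sum_eq_zero_iff_of_nonneg (fun j _ => by positivity)).mp hφteq i (Finset.mem_univ i)
    exact this
  have : max 0 (-u t i) = 0 := by
    have h := sq_eq_zero_iff.mp hterm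
    exact h
  have h4 := le_max_right (0:ℝ) (-u t i)
  rw [this] at h4
  linarith

set_option maxHeartbeats 2000000 in
/-- Comparison principle: the linearized SIR dynamics upper bound the nonlinear
mean-field SIR dynamics. If `0 ≤ χᵢ(0) ≤ xᵢ(0)`, `zᵢ(0) ≥ 0` and
`χᵢ(0) + zᵢ(0) ≤ 1` for all `i`, then `xᵢ(t) ≥ χᵢ(t) ≥ 0` for all `t ≥ 0`. -/
theorem sir_linear_upper_bounds_nonlinear
    {n : ℕ} (β : Fin n → Fin n → ℝ) (δ : Fin n → ℝ)
    (hβ : ∀ i j, 0 ≤ β i j) (hδ : ∀ i, 0 ≤ δ i)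
    (χ z x : ℝ → Fin n → ℝ)
    (hχ : ∀ i, ∀ t : ℝ, 0 ≤ t → HasDerivAt (fun s => χ s i)
      ((1 - χ t i - z t i) * (∑ j, β i j * χ t j) - δ i * χ t i) t)
    (hz : ∀ i, ∀ t : ℝ, 0 ≤ t → HasDerivAt (fun s => z s i) (δ i * χ t i) t)
    (hx : ∀ i, ∀ t : ℝ, 0 ≤ t → HasDerivAt (fun s => x s i)
      ((∑ j, β i j * x t j) - δ i * x t i) t)
    (hχ0 : ∀ i, 0 ≤ χ 0 i) (hχx0 : ∀ i, χ 0 i ≤ x 0 i)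
    (hz0 : ∀ i, 0 ≤ z 0 i) (hsum0 : ∀ i, χ 0 i + z 0 i ≤ 1) :
    ∀ t : ℝ, 0 ≤ t → ∀ i, 0 ≤ χ t i ∧ χ t i ≤ x t i := by
  intro t₀ ht₀
  -- the combined system
  set u : ℝ → (Fin n ⊕ (Fin n ⊕ (Fin n ⊕ Fin n))) → ℝ := fun t => Sum.elim (fun i => χ t i) (Sum.elim (fun i => z t i)
    (Sum.elim (fun i => 1 - χ t i - z t i) (fun i => x t i - χ t i))) with hu
  set u' : ℝ → (Fin n ⊕ (Fin n ⊕ (Fin n ⊕ Fin n))) → ℝ := fun t => Sum.elim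
      (fun i => (1 - χ t i - z t i) * (∑ j, β i j * χ t j) - δ i * χ t i)
      (Sum.elim (fun i => δ i * χ t i)
      (Sum.elim (fun i => -((1 - χ t i - z t i) * (∑ j, β i j * χ t j)))
      (fun i => ((∑ j, β i j * x t j) - δ i * x t i)
        - ((1 - χ t i - z t i) * (∑ j, β i j * χ t j) - δ i * χ t i)))) with hu'
  -- bound M on everything over [0, t₀]
  obtain ⟨Cχ, hCχ⟩ := (isCompact_Icc (a := (0:ℝ)) (b := t₀)).exists_bound_of_continuousOn
    (f := fun t => χ t) (continuousOn_pi.mpr fun i t ht => ((hχ i t ht.1).continuousAt).continuousWithinAt)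
  obtain ⟨Cz, hCz⟩ := (isCompact_Icc (a := (0:ℝ)) (b := t₀)).exists_bound_of_continuousOn
    (f := fun t => z t) (continuousOn_pi.mpr fun i t ht => ((hz i t ht.1).continuousAt).continuousWithinAt)
  obtain ⟨Cx, hCx⟩ := (isCompact_Icc (a := (0:ℝ)) (b := t₀)).exists_bound_of_continuousOn
    (f := fun t => x t) (continuousOn_pi.mpr fun i t ht => ((hx i t ht.1).continuousAt).continuousWithinAt)
  have hCχ0 : 0 ≤ Cχ := le_trans (norm_nonneg _) (hCχ 0 ⟨le_refl 0, ht₀⟩)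
  have hCz0 : 0 ≤ Cz := le_trans (norm_nonneg _) (hCz 0 ⟨le_refl 0, ht₀⟩)
  have hCx0 : 0 ≤ Cx := le_trans (norm_nonneg _) (hCx 0 ⟨le_refl 0, ht₀⟩)
  set M : ℝ := 1 + Cχ + Cz + Cx + (∑ i, ∑ j, β i j) + (∑ i, δ i) with hM
  have hβsum : 0 ≤ ∑ i, ∑ j, β i j :=
    Finset.sum_nonneg fun i _ => Finset.sum_nonneg fun j _ => hβ i j
  have hδsum : 0 ≤ ∑ i, δ i := Finset.sum_nonneg fun i _ => hδ i
  have hM1 : 1 ≤ M := by simp only [hM]; linarith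
  have hM0 : 0 ≤ M := by linarith
  have hβM : ∀ i j, β i j ≤ M := by
    intro i j
    have h1 : β i j ≤ ∑ j', β i j' := Finset.single_le_sum (fun j' _ => hβ i j') (mem_univ j)
    have h2 : (∑ j', β i j') ≤ ∑ i', ∑ j', β i' j' :=
      Finset.single_le_sum (fun i' _ => Finset.sum_nonneg fun j' _ => hβ i' j') (mem_univ i)
    simp only [hM]; linarith
  have hδM : ∀ i, δ i ≤ M := by
    intro i
    have h1 : δ i ≤ ∑ i', δ i' := Finset.single_le_sum (fun i' _ => hδ i') (mem_univ i)
    simp only [hM]; linarith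
  have hχa : ∀ t ∈ Icc (0:ℝ) t₀, ∀ i, |χ t i| ≤ M := by
    intro t ht i
    have := (norm_le_pi_norm (χ t) i).trans (hCχ t ht)
    simp only [Real.norm_eq_abs] at this
    simp only [hM]; linarith
  have hza : ∀ t ∈ Icc (0:ℝ) t₀, ∀ i, |z t i| ≤ M := by
    intro t ht i
    have := (norm_le_pi_norm (z t) i).trans (hCz t ht)
    simp only [Real.norm_eq_abs] at this
    simp only [hM]; linarith
  have hxa : ∀ t ∈ Icc (0:ℝ) t₀, ∀ i, |x t i| ≤ M := by
    intro t ht i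
    have := (norm_le_pi_norm (x t) i).trans (hCx t ht)
    simp only [Real.norm_eq_abs] at this
    simp only [hM]; linarith
  set C : ℝ := (3 * (n:ℝ) + 6) * M ^ 2 with hC
  have hC0 : 0 ≤ C := by positivity
  have key := orthant_invariance u u' t₀ C hC0 ?_ ?_ ?_
  · have h1 := key t₀ ⟨ht₀, le_refl t₀⟩
    intro i
    exact ⟨h1 (Sum.inl i), by have := h1 (Sum.inr (Sum.inr (Sum.inr i))); simp [hu] at this ⊢; linarith⟩
  · -- derivatives
    rintro (i | i | i | i) t ht
    · exact hχ i t ht.1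
    · exact hz i t ht.1
    · have h := ((hχ i t ht.1).add (hz i t ht.1)).const_sub 1
      have heq : (fun s => 1 - (χ s i + z s i)) = (fun s => 1 - χ s i - z s i) := by
        funext s; ring
      simp only [Pi.add_apply] at h
      rw [heq] at h
      show HasDerivAt (fun s => 1 - χ s i - z s i)
        (-((1 - χ t i - z t i) * (∑ j, β i j * χ t j))) t
      refine h.congr_deriv ?_
      ring
    · exact (hx i t ht.1).sub (hχ i t ht.1)
  · -- initial conditions
    rintro (i | i | i | i)
    · exact hχ0 i
    · exact hz0 i
    · simp only [hu, Sum.elim_inr, Sum.elim_inl]; linarith [hsum0 i]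
    · simp only [hu, Sum.elim_inr]; linarith [hχx0 i]
  · -- the quasimonotone bound
    intro t ht
    have hA1nn : ∀ j, (0:ℝ) ≤ max 0 (-(χ t j)) := fun j => le_max_left _ _
    set A1 : ℝ := ∑ j, max 0 (-(χ t j)) with hA1d
    set A2 : ℝ := ∑ j, max 0 (-(z t j)) with hA2d
    set A3 : ℝ := ∑ j, max 0 (-(1 - χ t j - z t j)) with hA3d
    set A4 : ℝ := ∑ j, max 0 (-(x t j - χ t j)) with hA4d
    have hSsplit : (∑ q, max 0 (-u t q)) = A1 + (A2 + (A3 + A4)) := by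
      simp only [hu, Fintype.sum_sum_type, Sum.elim_inl, Sum.elim_inr]
      rfl
    set S : ℝ := ∑ q, max 0 (-u t q) with hSd
    have hA1nn' : 0 ≤ A1 := Finset.sum_nonneg fun j _ => le_max_left _ _
    have hA2nn : 0 ≤ A2 := Finset.sum_nonneg fun j _ => le_max_left _ _
    have hA3nn : 0 ≤ A3 := Finset.sum_nonneg fun j _ => le_max_left _ _
    have hA4nn : 0 ≤ A4 := Finset.sum_nonneg fun j _ => le_max_left _ _
    have hS0 : 0 ≤ S := by rw [hSsplit]; linarith
    have hA1S : A1 ≤ S := by rw [hSsplit]; linarith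
    have hA2S : A2 ≤ S := by rw [hSsplit]; linarith
    have hA3S : A3 ≤ S := by rw [hSsplit]; linarith
    have hA4S : A4 ≤ S := by rw [hSsplit]; linarith
    have hχneg : ∀ j, max 0 (-(χ t j)) ≤ A1 :=
      fun j => Finset.single_le_sum (f := fun j => max 0 (-(χ t j)))
        (fun j _ => le_max_left _ _) (mem_univ j)
    have hzneg : ∀ j, max 0 (-(z t j)) ≤ A2 :=
      fun j => Finset.single_le_sum (f := fun j => max 0 (-(z t j)))
        (fun j _ => le_max_left _ _) (mem_univ j)
    have hcneg : ∀ j, max 0 (-(1 - χ t j - z t j)) ≤ A3 :=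
      fun j => Finset.single_le_sum (f := fun j => max 0 (-(1 - χ t j - z t j)))
        (fun j _ => le_max_left _ _) (mem_univ j)
    have hnegsum : ∀ (c w : Fin n → ℝ), (∀ j, 0 ≤ c j) → (∀ j, c j ≤ M) →
        -(∑ j, c j * w j) ≤ M * ∑ j, max 0 (-(w j)) := by
      intro c w hc hcM
      rw [Finset.mul_sum, ← Finset.sum_neg_distrib]
      refine Finset.sum_le_sum fun j _ => ?_
      have h1 := le_max_right (0:ℝ) (-(w j))
      have h2 := le_max_left (0:ℝ) (-(w j))
      nlinarith [hc j, hcM j]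
    have hBneg : ∀ i, max 0 (-(∑ j, β i j * χ t j)) ≤ M * A1 := fun i =>
      max_le (by positivity) (hnegsum (β i) (χ t) (hβ i) (hβM i))
    have hBabs : ∀ i, |∑ j, β i j * χ t j| ≤ (n:ℝ) * M ^ 2 := by
      intro i
      calc |∑ j, β i j * χ t j| ≤ ∑ j, |β i j * χ t j| := Finset.abs_sum_le_sum_abs _ _
        _ ≤ ∑ _j : Fin n, M * M := Finset.sum_le_sum (fun j _ => by
            rw [abs_mul, abs_of_nonneg (hβ i j)]
            exact mul_le_mul (hβM i j) (hχa t ht j) (abs_nonneg _) hM0)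
        _ = (n:ℝ) * M ^ 2 := by
            rw [Finset.sum_const, Finset.card_univ, Fintype.card_fin, nsmul_eq_mul]; ring
    have hciabs : ∀ i, |1 - χ t i - z t i| ≤ 3 * M := by
      intro i
      have h1 := abs_le.mp (hχa t ht i)
      have h2 := abs_le.mp (hza t ht i)
      rw [abs_le]
      constructor <;> [linarith [h1.1, h1.2, h2.1, h2.2, hM1]; linarith [h1.1, h1.2, h2.1, h2.2, hM1]]
    have hsumabs : ∀ i, |χ t i + z t i| ≤ 2 * M := by
      intro i
      have h1 := abs_le.mp (hχa t ht i)
      have h2 := abs_le.mp (hza t ht i)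
      rw [abs_le]
      constructor <;> [linarith [h1.1, h1.2, h2.1, h2.2]; linarith [h1.1, h1.2, h2.1, h2.2]]
    have hMM : M ≤ M ^ 2 := by nlinarith [hM1, hM0]
    rintro (i | i | i | i) hp
    · -- χ component
      simp only [hu, Sum.elim_inl] at hp
      simp only [hu', Sum.elim_inl]
      have h1 := neg_mul_le (hciabs i) (hBabs i)
      have h4 : δ i * χ t i ≤ 0 := mul_nonpos_of_nonneg_of_nonpos (hδ i) hp
      have e1 : (n:ℝ) * M ^ 2 * max 0 (-(1 - χ t i - z t i)) ≤ (n:ℝ) * M ^ 2 * S :=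
        mul_le_mul_of_nonneg_left ((hcneg i).trans hA3S) (by positivity)
      have e2 : 3 * M * max 0 (-(∑ j, β i j * χ t j)) ≤ 3 * M * (M * S) :=
        mul_le_mul_of_nonneg_left ((hBneg i).trans
          (mul_le_mul_of_nonneg_left hA1S hM0)) (by positivity)
      have hslack : 0 ≤ (2 * (n:ℝ) + 3) * M ^ 2 * S := by positivity
      simp only [hC]
      nlinarith [h1, h4, e1, e2, hslack]
    · -- z component
      simp only [hu', Sum.elim_inr, Sum.elim_inl]
      have h2 := le_max_right (0:ℝ) (-(χ t i))
      have h3 := le_max_left (0:ℝ) (-(χ t i))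
      have h1 : -(δ i * χ t i) ≤ M * max 0 (-(χ t i)) := by
        nlinarith [hδ i, hδM i]
      have hCM : M ≤ C := by
        simp only [hC]
        nlinarith [hMM, hM0, mul_nonneg (by positivity : (0:ℝ) ≤ 3 * (n:ℝ)) (sq_nonneg M)]
      have := mul_le_mul hCM ((hχneg i).trans hA1S) h3 hC0
      linarith
    · -- c component
      simp only [hu, Sum.elim_inr, Sum.elim_inl] at hp
      simp only [hu', Sum.elim_inr, Sum.elim_inl, neg_neg]
      have h1 := le_max_right (0:ℝ) (-(∑ j, β i j * χ t j))
      have hci0 : 0 ≤ -(1 - χ t i - z t i) := by linarith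
      have hci3 : -(1 - χ t i - z t i) ≤ 3 * M := by
        have := abs_le.mp (hciabs i); linarith [this.1]
      calc (1 - χ t i - z t i) * (∑ j, β i j * χ t j)
          = (-(1 - χ t i - z t i)) * (-(∑ j, β i j * χ t j)) := by ring
        _ ≤ (-(1 - χ t i - z t i)) * max 0 (-(∑ j, β i j * χ t j)) :=
            mul_le_mul_of_nonneg_left h1 hci0
        _ ≤ (3 * M) * max 0 (-(∑ j, β i j * χ t j)) :=
            mul_le_mul_of_nonneg_right hci3 (le_max_left _ _)
        _ ≤ 3 * M * (M * S) := by
            have := (hBneg i).trans (mul_le_mul_of_nonneg_left hA1S hM0)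
            nlinarith [hM0]
        _ ≤ C * S := by
            simp only [hC]
            nlinarith [hS0, hM1, mul_nonneg (mul_nonneg
              (by positivity : (0:ℝ) ≤ 3 * (n:ℝ) + 3) (sq_nonneg M)) hS0]
    · -- d component
      simp only [hu, Sum.elim_inr] at hp
      simp only [hu', Sum.elim_inr]
      have hsplitx : (∑ j, β i j * x t j)
          = (∑ j, β i j * (x t j - χ t j)) + ∑ j, β i j * χ t j := by
        rw [← Finset.sum_add_distrib]
        exact Finset.sum_congr rfl fun j _ => by ring
      rw [hsplitx]
      have hD : -(∑ j, β i j * (x t j - χ t j)) ≤ M * A4 :=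
        hnegsum (β i) (fun j => x t j - χ t j) (hβ i) (hβM i)
      have h2 := neg_mul_le (hsumabs i) (hBabs i)
      have hmaxadd : max 0 (-(χ t i + z t i)) ≤ max 0 (-(χ t i)) + max 0 (-(z t i)) := by
        apply max_le
        · exact add_nonneg (le_max_left _ _) (le_max_left _ _)
        · have := le_max_right (0:ℝ) (-(χ t i))
          have := le_max_right (0:ℝ) (-(z t i))
          linarith
      have h4 : δ i * (x t i - χ t i) ≤ 0 := mul_nonpos_of_nonneg_of_nonpos (hδ i) hp
      have e1 : M * A4 ≤ M * S := mul_le_mul_of_nonneg_left hA4S hM0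
      have e2 : (n:ℝ) * M ^ 2 * max 0 (-(χ t i + z t i))
          ≤ (n:ℝ) * M ^ 2 * (A1 + A2) :=
        mul_le_mul_of_nonneg_left (hmaxadd.trans
          (add_le_add (hχneg i) (hzneg i))) (by positivity)
      have e3 : 2 * M * max 0 (-(∑ j, β i j * χ t j)) ≤ 2 * M * (M * A1) :=
        mul_le_mul_of_nonneg_left (hBneg i) (by positivity)
      simp only [hC]
      nlinarith [hD, h2, h4, e1, e2, e3,
        mul_nonneg (by positivity : (0:ℝ) ≤ (n:ℝ) * M ^ 2) (by linarith : (0:ℝ) ≤ S - A1),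
        mul_nonneg (by positivity : (0:ℝ) ≤ (n:ℝ) * M ^ 2) (by linarith : (0:ℝ) ≤ S - A2),
        mul_nonneg (by positivity : (0:ℝ) ≤ 2 * M ^ 2) (by linarith : (0:ℝ) ≤ S - A1),
        mul_nonneg hS0 (by linarith : (0:ℝ) ≤ M ^ 2 - M),
        mul_nonneg (mul_nonneg (by positivity : (0:ℝ) ≤ (n:ℝ) + 3) (sq_nonneg M)) hS0]
end
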